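/- Let A be a real n×n matrix and r, δ₁, δ₂ ∈ ℝⁿ with A δ₁ and A δ₂ linearly independent. Let W be the 2×2 Gram matrix W_A(δ₁, δ₂), v = (⟨r, A δ₁⟩, ⟨r, A δ₂⟩)ᵀ, (β₁, β₂)ᵀ = W⁻¹ v, and r' = r − β₁ A δ₁ − β₂ A δ₂. Then ‖r'‖² ≤ ‖r‖² − (⟨r, A δ₁⟩² + ⟨r, A δ₂⟩²) / (‖A δ₁‖² + ‖A δ₂‖²). -/

import Mathlib

open Matrix
open scoped RealInnerProductSpace

/-- Action of a real matrix on Euclidean space. -/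
noncomputable def mulE {m n : ℕ} (M : Matrix (Fin m) (Fin n) ℝ)
    (x : EuclideanSpace ℝ (Fin n)) : EuclideanSpace ℝ (Fin m) :=
  Matrix.toEuclideanLin M x

/-- The 2×2 Gram matrix `W_A(x, y)`. -/
noncomputable def gram {n : ℕ} (A : Matrix (Fin n) (Fin n) ℝ)
    (x y : EuclideanSpace ℝ (Fin n)) : Matrix (Fin 2) (Fin 2) ℝ :=
  !![⟪mulE A x, mulE A x⟫, ⟪mulE A y, mulE A x⟫;
     ⟪mulE A x, mulE A y⟫, ⟪mulE A y, mulE A y⟫]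

set_option maxHeartbeats 2000000 in
/-- If `A δ₁`, `A δ₂` are linearly independent, the two-dimensional minimum residual update
`r' = r − β₁ A δ₁ − β₂ A δ₂` with `(β₁, β₂)ᵀ = W_A(δ₁,δ₂)⁻¹ v` satisfies
`‖r'‖² ≤ ‖r‖² − (⟨r, Aδ₁⟩² + ⟨r, Aδ₂⟩²) / (‖Aδ₁‖² + ‖Aδ₂‖²)`. -/
theorem stmt4 {n : ℕ} (A : Matrix (Fin n) (Fin n) ℝ)
    (r δ1 δ2 : EuclideanSpace ℝ (Fin n))
    (hind : LinearIndependent ℝ ![mulE A δ1, mulE A δ2])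
    (W : Matrix (Fin 2) (Fin 2) ℝ) (hW : W = gram A δ1 δ2)
    (v : Fin 2 → ℝ) (hv : v = ![⟪r, mulE A δ1⟫, ⟪r, mulE A δ2⟫])
    (β : Fin 2 → ℝ) (hβ : β = W⁻¹.mulVec v)
    (r' : EuclideanSpace ℝ (Fin n))
    (hr' : r' = r - β 0 • mulE A δ1 - β 1 • mulE A δ2) :
    ‖r'‖ ^ 2 ≤ ‖r‖ ^ 2 -
      (⟪r, mulE A δ1⟫ ^ 2 + ⟪r, mulE A δ2⟫ ^ 2) / (‖mulE A δ1‖ ^ 2 + ‖mulE A δ2‖ ^ 2) := by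
  set u1 := mulE A δ1 with hu1
  set u2 := mulE A δ2 with hu2
  obtain ⟨hu2ne, hnp⟩ := linearIndependent_fin2.mp hind
  have hu1ne : u1 ≠ 0 := by
    have := hind.ne_zero 0
    simpa using this
  -- determinant of the Gram matrix is nonzero
  have hdet : W.det ≠ 0 := by
    rw [hW]
    simp only [_root_.gram, Matrix.det_fin_two_of, ← hu1, ← hu2]
    intro h
    have hcs : ‖⟪u2, u1⟫‖ = ‖u2‖ * ‖u1‖ := by
      have h1 : ⟪u1, u1⟫ = ‖u1‖ ^ 2 := real_inner_self_eq_norm_sq u1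
      have h2 : ⟪u2, u2⟫ = ‖u2‖ ^ 2 := real_inner_self_eq_norm_sq u2
      have h3 : ⟪u1, u2⟫ = ⟪u2, u1⟫ := real_inner_comm u2 u1
      have hsq : ‖⟪u2, u1⟫‖ ^ 2 = (‖u2‖ * ‖u1‖) ^ 2 := by
        rw [h1, h2, h3] at h
        rw [Real.norm_eq_abs, sq_abs]
        linear_combination -h
      rw [← Real.sqrt_sq (norm_nonneg (⟪u2, u1⟫ : ℝ)), hsq,
        Real.sqrt_sq (by positivity)]
    obtain ⟨c, -, hc⟩ := (norm_inner_eq_norm_iff hu2ne hu1ne).mp hcs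
    exact hnp c hc.symm
  -- normal equations
  have hWβ : W.mulVec β = v := by
    rw [hβ, Matrix.mulVec_mulVec, Matrix.mul_nonsing_inv W (isUnit_iff_ne_zero.mpr hdet),
      Matrix.one_mulVec]
  have hW00 : W 0 0 = ⟪u1, u1⟫ := by rw [hW]; rfl
  have hW01 : W 0 1 = ⟪u2, u1⟫ := by rw [hW]; rfl
  have hW10 : W 1 0 = ⟪u1, u2⟫ := by rw [hW]; rfl
  have hW11 : W 1 1 = ⟪u2, u2⟫ := by rw [hW]; rfl
  have he0 : ⟪u1, u1⟫ * β 0 + ⟪u2, u1⟫ * β 1 = ⟪r, u1⟫ := by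
    have := congrFun hWβ 0
    rw [hv] at this
    simpa [Matrix.mulVec, dotProduct, Fin.sum_univ_two, hW00, hW01] using this
  have he1 : ⟪u1, u2⟫ * β 0 + ⟪u2, u2⟫ * β 1 = ⟪r, u2⟫ := by
    have := congrFun hWβ 1
    rw [hv] at this
    simpa [Matrix.mulVec, dotProduct, Fin.sum_univ_two, hW10, hW11] using this
  -- orthogonality of the residual
  have ho1 : ⟪r', u1⟫ = 0 := by
    rw [hr']
    simp only [inner_sub_left, real_inner_smul_left, ← hu1, ← hu2]
    linarith [he0]
  have ho2 : ⟪r', u2⟫ = 0 := by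
    rw [hr']
    simp only [inner_sub_left, real_inner_smul_left, ← hu1, ← hu2]
    linarith [he1]
  set a := (⟪r, u1⟫ : ℝ) with ha
  set b := (⟪r, u2⟫ : ℝ) with hb
  set t := ‖u1‖ ^ 2 + ‖u2‖ ^ 2 with htdef
  have ht : 0 < t := by
    have : 0 < ‖u1‖ := norm_pos_iff.mpr hu1ne
    positivity
  set q : EuclideanSpace ℝ (Fin n) := (a / t) • u1 + (b / t) • u2 with hq
  -- r - q = r' + ((β 0 - a/t) • u1 + (β 1 - b/t) • u2), orthogonal decomposition
  have hdec : r - q = r' + ((β 0 - a / t) • u1 + (β 1 - b / t) • u2) := by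
    rw [hr', hq]
    module
  have hperp : ⟪r', (β 0 - a / t) • u1 + (β 1 - b / t) • u2⟫ = 0 := by
    rw [inner_add_right, real_inner_smul_right, real_inner_smul_right, ho1, ho2]
    ring
  have hle1 : ‖r'‖ ^ 2 ≤ ‖r - q‖ ^ 2 := by
    rw [hdec, norm_add_sq_real, hperp]
    have := sq_nonneg ‖(β 0 - a / t) • u1 + (β 1 - b / t) • u2‖
    linarith
  have hrq : ‖r - q‖ ^ 2 = ‖r‖ ^ 2 - 2 * ⟪r, q⟫ + ‖q‖ ^ 2 :=
    norm_sub_sq_real r q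
  have hinnerq : ⟪r, q⟫ = (a ^ 2 + b ^ 2) / t := by
    rw [hq, inner_add_right, real_inner_smul_right, real_inner_smul_right, ← ha, ← hb]
    ring
  have hnormq : ‖q‖ ^ 2 ≤ (a ^ 2 + b ^ 2) / t := by
    have hq2 : ‖q‖ ^ 2 = (a / t) ^ 2 * ‖u1‖ ^ 2 + 2 * (a / t) * (b / t) * ⟪u1, u2⟫
        + (b / t) ^ 2 * ‖u2‖ ^ 2 := by
      rw [hq, norm_add_sq_real, real_inner_smul_left, real_inner_smul_right,
        norm_smul, norm_smul]
      simp only [Real.norm_eq_abs, mul_pow, sq_abs]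
      ring
    have hcs : |⟪u1, u2⟫| ≤ ‖u1‖ * ‖u2‖ := abs_real_inner_le_norm u1 u2
    have key : a ^ 2 * ‖u1‖ ^ 2 + 2 * a * b * ⟪u1, u2⟫ + b ^ 2 * ‖u2‖ ^ 2
        ≤ t * (a ^ 2 + b ^ 2) := by
      have habs := abs_le.mp hcs
      rw [htdef]
      rcases le_or_gt 0 (a * b) with hab | hab
      · nlinarith [mul_le_mul_of_nonneg_left habs.2 hab, sq_nonneg (a * ‖u2‖ - b * ‖u1‖)]
      · nlinarith [mul_le_mul_of_nonpos_left habs.1 hab.le, sq_nonneg (a * ‖u2‖ + b * ‖u1‖)]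
    have heq : (a / t) ^ 2 * ‖u1‖ ^ 2 + 2 * (a / t) * (b / t) * ⟪u1, u2⟫
        + (b / t) ^ 2 * ‖u2‖ ^ 2
        = (a ^ 2 * ‖u1‖ ^ 2 + 2 * a * b * ⟪u1, u2⟫ + b ^ 2 * ‖u2‖ ^ 2) / t ^ 2 := by
      field_simp
    rw [hq2, heq, div_le_div_iff₀ (by positivity) ht]
    nlinarith [mul_le_mul_of_nonneg_right key ht.le]
  have : ‖r - q‖ ^ 2 ≤ ‖r‖ ^ 2 - (a ^ 2 + b ^ 2) / t := by
    rw [hrq, hinnerq]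
    linarith
  exact hle1.trans this
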